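/- Under the IRM with i.i.d. requests over a finite catalog X, for any online caching policy A, the time-average total cost satisfies liminf_{T→∞} 𝒞_A(S_1, r_T) ≥ min_S 𝒞(S) almost surely, where 𝒞_A(S_1, r_T) = (1/T) Σ_{t=1}^T [C_m(S_t, S_{t+1}) + C(r_t, S_{t+1})], C_m(T,S) = 0 if S = T, C_r if |S \ T| = 1, and +∞ otherwise, C(r,S) = min(C_a(r,S), C_r), and 𝒞(S) = Σ_x λ_x C(x,S). -/

import Mathlib

open MeasureTheory ProbabilityTheory Filter
open scoped ENNReal

/-- Service cost `C(r,S) = min(C_a(r,S), C_r)`, with `C_a(r,S) = min_{y∈S} C_a(r,y)`. -/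
noncomputable def serveCost {X : Type*} (Ca : X → X → ℝ≥0∞) (Cr : ℝ≥0∞)
    (x : X) (S : Finset X) : ℝ≥0∞ :=
  min (⨅ y ∈ S, Ca x y) Cr

/-- Movement cost: `0` if the state is unchanged, `C_r` if one object is replaced,
`+∞` otherwise. -/
noncomputable def moveCost {X : Type*} [DecidableEq X] (Cr : ℝ≥0∞)
    (T S : Finset X) : ℝ≥0∞ :=
  if S = T then 0 else if (S \ T).card = 1 then Cr else ⊤

set_option linter.unusedSectionVars false
set_option maxHeartbeats 1000000

section Aux
open Finset
open Finset

variable {X : Type*} [Fintype X]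

def pw (q : X → ℝ) {n : ℕ} (w : Fin n → X) : ℝ := ∏ i, q (w i)

def Ex (q : X → ℝ) (n : ℕ) (F : (Fin n → X) → ℝ) : ℝ := ∑ w : Fin n → X, pw q w * F w

def res {X : Type*} {m n : ℕ} (h : m ≤ n) (w : Fin n → X) : Fin m → X :=
  fun i => w (Fin.castLE h i)

lemma sum_snoc {n : ℕ} (F : (Fin (n+1) → X) → ℝ) :
    ∑ w : Fin (n+1) → X, F w = ∑ u : Fin n → X, ∑ x : X, F (Fin.snoc u x) := by
  let e : ((Fin n → X) × X) ≃ (Fin (n+1) → X) :=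
    ⟨fun p => Fin.snoc p.1 p.2, fun w => (Fin.init w, w (Fin.last n)),
      fun p => by simp, fun w => by simp⟩
  rw [← Fintype.sum_equiv e (fun p => F (Fin.snoc p.1 p.2)) F (fun p => by rfl),
    Fintype.sum_prod_type]

lemma pw_snoc (q : X → ℝ) {n : ℕ} (u : Fin n → X) (x : X) :
    pw q (Fin.snoc u x) = pw q u * q x := by
  rw [pw, Fin.prod_univ_castSucc]
  simp [pw]

lemma pw_nonneg {q : X → ℝ} (hq : ∀ x, 0 ≤ q x) {n : ℕ} (w : Fin n → X) : 0 ≤ pw q w :=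
  Finset.prod_nonneg fun i _ => hq _

lemma Ex_snoc (q : X → ℝ) {n : ℕ} (F : (Fin (n+1) → X) → ℝ) :
    Ex q (n+1) F = ∑ u : Fin n → X, pw q u * ∑ x : X, q x * F (Fin.snoc u x) := by
  rw [Ex, sum_snoc]
  refine Finset.sum_congr rfl fun u _ => ?_
  rw [Finset.mul_sum]
  exact Finset.sum_congr rfl fun x _ => by rw [pw_snoc]; ring

lemma Ex_const {q : X → ℝ} (hq1 : ∑ x, q x = 1) (n : ℕ) (a : ℝ) :
    Ex q n (fun _ => a) = a := by
  induction n with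
  | zero => rw [Ex, Fintype.sum_unique]; simp [pw]
  | succ n ih =>
    rw [Ex_snoc]
    have h : (∑ x : X, q x * a) = a := by rw [← Finset.sum_mul, hq1, one_mul]
    simp_rw [h]
    exact ih

lemma Ex_mono {q : X → ℝ} (hq0 : ∀ x, 0 ≤ q x) {n : ℕ} {F G : (Fin n → X) → ℝ}
    (h : ∀ w, F w ≤ G w) : Ex q n F ≤ Ex q n G :=
  Finset.sum_le_sum fun w _ => mul_le_mul_of_nonneg_left (h w) (pw_nonneg hq0 w)

lemma Ex_sum {q : X → ℝ} {n : ℕ} {ι : Type*} (s : Finset ι) (F : ι → (Fin n → X) → ℝ) :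
    Ex q n (fun w => ∑ t ∈ s, F t w) = ∑ t ∈ s, Ex q n (F t) := by
  simp_rw [Ex, Finset.mul_sum]
  exact Finset.sum_comm

lemma Ex_init {q : X → ℝ} (hq1 : ∑ x, q x = 1) {n : ℕ} (G : (Fin n → X) → ℝ) :
    Ex q (n+1) (fun w => G (Fin.init w)) = Ex q n G := by
  rw [Ex_snoc]
  refine Finset.sum_congr rfl fun u _ => ?_
  congr 1
  simp only [Fin.init_snoc]
  rw [← Finset.sum_mul, hq1, one_mul]

lemma res_init {X : Type*} {m n : ℕ} (h : m ≤ n) (h' : m ≤ n + 1) (w : Fin (n+1) → X) :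
    res h' w = res h (Fin.init w) := by
  funext i
  rfl

lemma res_self {X : Type*} {m : ℕ} (h : m ≤ m) (w : Fin m → X) : res h w = w := by
  funext i
  rfl

lemma Ex_res {q : X → ℝ} (hq1 : ∑ x, q x = 1) :
    ∀ {n m : ℕ} (h : m ≤ n) (F : (Fin m → X) → ℝ),
    Ex q n (fun w => F (res h w)) = Ex q m F := by
  intro n
  induction n with
  | zero =>
    intro m h F
    obtain rfl : m = 0 := Nat.le_zero.mp h
    simp_rw [res_self]
  | succ n ih =>
    intro m h F
    rcases Nat.lt_or_ge m (n+1) with hm | hm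
    · have h2 : m ≤ n := by omega
      simp_rw [res_init h2 h]
      exact (Ex_init hq1 (fun u => F (res h2 u))).trans (ih h2 F)
    · obtain rfl : m = n + 1 := by omega
      simp_rw [res_self]

lemma Ex_key {q : X → ℝ} {n : ℕ} (G : (Fin n → X) → ℝ) (H : (Fin (n+1) → X) → ℝ)
    (hH : ∀ u : Fin n → X, ∑ x : X, q x * H (Fin.snoc u x) = 0) :
    Ex q (n+1) (fun w => G (Fin.init w) * H w) = 0 := by
  rw [Ex_snoc]
  refine Finset.sum_eq_zero fun u _ => ?_
  have h : ∑ x : X, q x * (G u * H (Fin.snoc u x)) = 0 := by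
    rw [show (∑ x : X, q x * (G u * H (Fin.snoc u x)))
        = G u * ∑ x : X, q x * H (Fin.snoc u x) by
      rw [Finset.mul_sum]; exact Finset.sum_congr rfl fun x _ => by ring]
    rw [hH u, mul_zero]
  simp only [Fin.init_snoc]
  rw [h, mul_zero]

lemma res_res {X : Type*} {a b c : ℕ} (hab : a ≤ b) (hbc : b ≤ c) (hac : a ≤ c)
    (w : Fin c → X) : res hab (res hbc w) = res hac w := by
  funext i
  rfl

lemma Ex_cross_zero {X : Type*} [Fintype X] {q : X → ℝ} (hq1 : ∑ x, q x = 1)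
    (ζ : (t : ℕ) → (Fin (t+2) → X) → ℝ)
    (hcent : ∀ t (u : Fin (t+1) → X), ∑ x : X, q x * ζ t (Fin.snoc u x) = 0)
    {s t N : ℕ} (hst : s < t) (hs : s + 2 ≤ N + 1) (ht : t + 2 ≤ N + 1) :
    Ex q (N+1) (fun w => ζ s (res hs w) * ζ t (res ht w)) = 0 := by
  have h1 : s + 2 ≤ t + 2 := by omega
  have h2 : s + 2 ≤ t + 1 := by omega
  have key : Ex q (t+2) (fun v => ζ s (res h1 v) * ζ t v) = 0 := by
    exact Ex_key (q := q) (n := t+1) (fun u => ζ s (res h2 u)) (ζ t)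
      (fun u => hcent t u)
  exact (Ex_res hq1 ht (fun v => ζ s (res h1 v) * ζ t v)).trans key

lemma secondMoment {X : Type*} [Fintype X] {q : X → ℝ} (hq0 : ∀ x, 0 ≤ q x)
    (hq1 : ∑ x, q x = 1)
    (ζ : (t : ℕ) → (Fin (t+2) → X) → ℝ) (c : ℝ) (hc : 0 ≤ c)
    (hb : ∀ t w, |ζ t w| ≤ c)
    (hcent : ∀ t (u : Fin (t+1) → X), ∑ x : X, q x * ζ t (Fin.snoc u x) = 0)
    (N : ℕ) :
    Ex q (N+1) (fun w => (∑ t : Fin N, ζ t.val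
        (res (Nat.succ_le_succ (Nat.succ_le_of_lt t.isLt)) w))^2) ≤ N * c^2 := by
  have hres : ∀ t : Fin N, t.val + 2 ≤ N + 1 :=
    fun t => Nat.succ_le_succ (Nat.succ_le_of_lt t.isLt)
  have expand : ∀ w : Fin (N+1) → X,
      (∑ t : Fin N, ζ t.val (res (hres t) w))^2
      = ∑ t : Fin N, ∑ t' : Fin N, ζ t.val (res (hres t) w) * ζ t'.val (res (hres t') w) := by
    intro w
    rw [sq, Finset.sum_mul_sum]
  calc Ex q (N+1) (fun w => (∑ t : Fin N, ζ t.val (res (hres t) w))^2)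
      = ∑ t : Fin N, ∑ t' : Fin N, Ex q (N+1)
          (fun w => ζ t.val (res (hres t) w) * ζ t'.val (res (hres t') w)) := by
        simp_rw [expand]
        rw [Ex_sum]
        exact Finset.sum_congr rfl fun t _ => Ex_sum _ _
    _ ≤ ∑ t : Fin N, ∑ t' : Fin N, (if t = t' then c^2 else 0) := by
        refine Finset.sum_le_sum fun t _ => Finset.sum_le_sum fun t' _ => ?_
        rcases lt_trichotomy t.val t'.val with h | h | h
        · rw [Ex_cross_zero hq1 ζ hcent h (hres t) (hres t'), if_neg (by
            intro he; rw [he] at h; exact lt_irrefl _ h)]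
        · have he : t = t' := Fin.ext h
          rw [if_pos he]
          calc Ex q (N+1) (fun w => ζ t.val (res (hres t) w) * ζ t'.val (res (hres t') w))
              ≤ Ex q (N+1) (fun _ => c^2) := by
                refine Ex_mono hq0 fun w => ?_
                calc ζ t.val (res (hres t) w) * ζ t'.val (res (hres t') w)
                    ≤ |ζ t.val (res (hres t) w) * ζ t'.val (res (hres t') w)| := le_abs_self _
                  _ = |ζ t.val (res (hres t) w)| * |ζ t'.val (res (hres t') w)| := abs_mul _ _
                  _ ≤ c * c := mul_le_mul (hb _ _) (hb _ _) (abs_nonneg _) hc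
                  _ = c^2 := (sq c).symm
            _ = c^2 := Ex_const hq1 _ _
        · have h0 : Ex q (N+1)
              (fun w => ζ t'.val (res (hres t') w) * ζ t.val (res (hres t) w)) = 0 :=
            Ex_cross_zero hq1 ζ hcent h (hres t') (hres t)
          rw [if_neg (by intro he; rw [he] at h; exact lt_irrefl _ h)]
          refine le_of_eq ?_
          rw [show (fun w => ζ t.val (res (hres t) w) * ζ t'.val (res (hres t') w))
              = (fun w => ζ t'.val (res (hres t') w) * ζ t.val (res (hres t) w)) from
            funext fun w => mul_comm _ _]
          exact h0
    _ = ∑ t : Fin N, c^2 := by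
        refine Finset.sum_congr rfl fun t _ => ?_
        rw [Finset.sum_ite_eq (Finset.univ : Finset (Fin N)) t (fun _ => c^2)]
        simp
    _ = N * c^2 := by rw [Finset.sum_const, Finset.card_univ, Fintype.card_fin, nsmul_eq_mul]

lemma sum_meas_singleton {X : Type*} [Fintype X] [MeasurableSpace X]
    [MeasurableSingletonClass X] (ν : Measure X) : ∑ x : X, ν {x} = ν Set.univ := by
  have h : (Set.univ : Set X) = ⋃ x ∈ (Finset.univ : Finset X), ({x} : Set X) := by
    ext y; simp
  rw [h, measure_biUnion_finset (fun x _ y _ hxy => by simpa using hxy)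
    (fun x _ => measurableSet_singleton x)]

def wext {X : Type*} (x0 : X) {n : ℕ} (w : Fin n → X) (i : ℕ) : X :=
  if h : i < n then w ⟨i, h⟩ else x0

lemma wext_fin {X : Type*} (x0 : X) {n : ℕ} (w : Fin n → X) (i : Fin n) :
    wext x0 w i.val = w i := by
  rw [wext, dif_pos i.isLt]

lemma lint_eq {Ω : Type*} [MeasurableSpace Ω] (μ : Measure Ω) [IsProbabilityMeasure μ]
    {X : Type*} [Fintype X] [MeasurableSpace X] [MeasurableSingletonClass X]
    (ν : Measure X) [IsProbabilityMeasure ν]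
    (r : ℕ → Ω → X) (hrmeas : ∀ t, Measurable (r t))
    (hindep : iIndepFun (m := fun _ : ℕ => ‹MeasurableSpace X›) r μ)
    (hident : ∀ t, Measure.map (r t) μ = ν)
    (n : ℕ) (F : (Fin n → X) → ℝ) (hF : ∀ w, 0 ≤ F w) :
    ∫⁻ ω, ENNReal.ofReal (F (fun i : Fin n => r i.val ω)) ∂μ
      = ENNReal.ofReal (Ex (fun x => (ν {x}).toReal) n F) := by
  have hX : Nonempty X := by
    rcases isEmpty_or_nonempty X with h | h
    · exfalso
      have h1 : ν Set.univ = 1 := measure_univ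
      rw [Set.univ_eq_empty_iff.mpr h, measure_empty] at h1
      exact zero_ne_one h1
    · exact h
  obtain ⟨x0⟩ := hX
  have hR : Measurable (fun ω (i : Fin n) => r i.val ω) :=
    measurable_pi_lambda _ fun i => hrmeas i.val
  have hmap : ∀ w : Fin n → X,
      (μ.map (fun ω (i : Fin n) => r i.val ω)) {w} = ∏ i : Fin n, ν {w i} := by
    intro w
    rw [Measure.map_apply hR (measurableSet_singleton w)]
    have hpre : (fun ω (i : Fin n) => r i.val ω) ⁻¹' {w}
        = ⋂ i ∈ Finset.range n, r i ⁻¹' {wext x0 w i} := by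
      ext ω
      simp only [Set.mem_preimage, Set.mem_singleton_iff, Set.mem_iInter, Finset.mem_range,
        funext_iff]
      constructor
      · intro h i hi
        rw [show (wext x0 w i) = w ⟨i, hi⟩ from wext_fin x0 w ⟨i, hi⟩]
        exact h ⟨i, hi⟩
      · intro h i
        rw [← wext_fin x0 w i]
        exact h i.val i.isLt
    rw [hpre, hindep.meas_biInter (fun i hi => ⟨{wext x0 w i}, measurableSet_singleton _, rfl⟩)]
    rw [Finset.prod_congr rfl (fun i (_ : i ∈ Finset.range n) =>
      show μ (r i ⁻¹' {wext x0 w i}) = ν {wext x0 w i} by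
        rw [← hident i, Measure.map_apply (hrmeas i) (measurableSet_singleton _)])]
    rw [← Fin.prod_univ_eq_prod_range (fun i => ν {wext x0 w i}) n]
    exact Finset.prod_congr rfl fun i _ => by rw [wext_fin]
  rw [← lintegral_map (f := fun w => ENNReal.ofReal (F w))
      (measurable_of_countable _) hR, lintegral_fintype]
  have hEx : ENNReal.ofReal (Ex (fun x => (ν {x}).toReal) n F)
      = ∑ w : Fin n → X, ENNReal.ofReal (pw (fun x => (ν {x}).toReal) w * F w) := by
    rw [Ex, ENNReal.ofReal_sum_of_nonneg]
    intro w _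
    exact mul_nonneg (Finset.prod_nonneg fun i _ => ENNReal.toReal_nonneg) (hF w)
  rw [hEx]
  refine Finset.sum_congr rfl fun w _ => ?_
  rw [hmap w, pw, ENNReal.ofReal_mul (Finset.prod_nonneg fun i _ => ENNReal.toReal_nonneg),
    ← ENNReal.toReal_prod, ENNReal.ofReal_toReal (ENNReal.prod_ne_top fun i _ => measure_ne_top ν _)]
  exact mul_comm _ _


lemma interp (z : ℕ → ℝ) (c : ℝ) (hc : 0 ≤ c) (hb : ∀ t, |z t| ≤ c)
    (h : Tendsto (fun n : ℕ => (∑ t ∈ Finset.range ((n+1)^2), z t) / (((n+1)^2 : ℕ) : ℝ))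
      atTop (nhds 0)) :
    Tendsto (fun N : ℕ => (∑ t ∈ Finset.range N, z t) / (N : ℝ)) atTop (nhds 0) := by
  set Sz : ℕ → ℝ := fun N => ∑ t ∈ Finset.range N, z t with hSz
  have hsq : Tendsto (fun k : ℕ => Sz (k^2) / ((k^2 : ℕ) : ℝ)) atTop (nhds 0) := by
    rw [← tendsto_add_atTop_iff_nat 1]
    exact h
  have habs : Tendsto (fun k : ℕ => |Sz (k^2) / ((k^2 : ℕ) : ℝ)|) atTop (nhds 0) := by
    have := hsq.abs
    simpa using this
  have hterm2 : Tendsto (fun k : ℕ => (2*(k:ℝ)+1)*c/((k:ℝ)^2)) atTop (nhds 0) := by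
    apply squeeze_zero' (g := fun k : ℕ => 3*c/(k:ℝ))
    · filter_upwards [eventually_ge_atTop 1] with k hk
      positivity
    · filter_upwards [eventually_ge_atTop 1] with k hk
      have hk1 : (1:ℝ) ≤ (k:ℝ) := by exact_mod_cast hk
      rw [div_le_div_iff₀ (by positivity) (by positivity)]
      have h2 : (2*(k:ℝ)+1)*(k:ℝ) ≤ 3*(k:ℝ)^2 := by nlinarith
      nlinarith [mul_le_mul_of_nonneg_left h2 hc]
    · exact tendsto_const_div_atTop_nhds_zero_nat (3*c)
  have hu : Tendsto (fun k : ℕ => |Sz (k^2) / ((k^2 : ℕ) : ℝ)| + (2*(k:ℝ)+1)*c/((k:ℝ)^2))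
      atTop (nhds 0) := by
    have := habs.add hterm2
    simpa using this
  have hsqrt : Tendsto (fun N : ℕ => Nat.sqrt N) atTop atTop := by
    apply tendsto_atTop_atTop.mpr
    intro b
    refine ⟨b*b, fun N hN => ?_⟩
    have := Nat.sqrt_le_sqrt hN
    rwa [Nat.sqrt_eq] at this
  refine squeeze_zero_norm'
    (a := fun N : ℕ => |Sz ((Nat.sqrt N)^2) / (((Nat.sqrt N)^2 : ℕ) : ℝ)|
      + (2*((Nat.sqrt N):ℝ)+1)*c/(((Nat.sqrt N):ℝ)^2)) ?_ (hu.comp hsqrt)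
  filter_upwards [eventually_ge_atTop 1] with N hN
  set k := Nat.sqrt N with hk
  have hk1 : 1 ≤ k := Nat.sqrt_pos.mpr hN
  have hk2 : k^2 ≤ N := Nat.sqrt_le' N
  have hk3 : N ≤ k^2 + 2*k := by
    have h3 : N < (k+1)^2 := Nat.lt_succ_sqrt' N
    have h4 : (k+1)^2 = k^2 + 2*k + 1 := by ring
    omega
  have hKpos : (0:ℝ) < ((k^2:ℕ):ℝ) := by
    have : 1 ≤ k^2 := Nat.one_le_iff_ne_zero.mpr (by positivity)
    exact_mod_cast Nat.lt_of_lt_of_le Nat.zero_lt_one this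
  have hNpos : (0:ℝ) < (N:ℝ) := by exact_mod_cast hN
  have hKN : ((k^2:ℕ):ℝ) ≤ (N:ℝ) := by exact_mod_cast hk2
  -- bound on the increment
  have hinc : |Sz N - Sz (k^2)| ≤ ((N - k^2 : ℕ) : ℝ) * c := by
    rw [hSz]
    simp only
    rw [← Finset.sum_Ico_eq_sub z hk2]
    calc |∑ t ∈ Finset.Ico (k^2) N, z t| ≤ ∑ t ∈ Finset.Ico (k^2) N, |z t| :=
          Finset.abs_sum_le_sum_abs _ _
      _ ≤ (Finset.Ico (k^2) N).card • c := Finset.sum_le_card_nsmul _ _ c (fun t _ => hb t)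
      _ = ((N - k^2 : ℕ) : ℝ) * c := by rw [Nat.card_Ico, nsmul_eq_mul]
  have hincc : ((N - k^2 : ℕ) : ℝ) ≤ 2*(k:ℝ)+1 := by
    have : N - k^2 ≤ 2*k := by omega
    calc ((N - k^2 : ℕ) : ℝ) ≤ ((2*k : ℕ) : ℝ) := by exact_mod_cast this
      _ ≤ 2*(k:ℝ)+1 := by push_cast; linarith
  have h1 : |Sz N| ≤ |Sz (k^2)| + (2*(k:ℝ)+1)*c := by
    have := abs_sub_abs_le_abs_sub (Sz N) (Sz (k^2))
    have h2 : ((N - k^2:ℕ):ℝ) * c ≤ (2*(k:ℝ)+1)*c := mul_le_mul_of_nonneg_right hincc hc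
    linarith [hinc]
  have hmain : |Sz N| / (N:ℝ) ≤ |Sz (k^2)| / ((k^2:ℕ):ℝ) + (2*(k:ℝ)+1)*c/((k:ℝ)^2) := by
    have hcast : ((k^2:ℕ):ℝ) = ((k:ℝ))^2 := by push_cast; ring
    calc |Sz N| / (N:ℝ) ≤ (|Sz (k^2)| + (2*(k:ℝ)+1)*c) / (N:ℝ) := by
          exact div_le_div_of_nonneg_right h1 hNpos.le
      _ ≤ (|Sz (k^2)| + (2*(k:ℝ)+1)*c) / ((k^2:ℕ):ℝ) := by
          exact div_le_div_of_nonneg_left (by positivity) hKpos hKN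
      _ = |Sz (k^2)| / ((k^2:ℕ):ℝ) + (2*(k:ℝ)+1)*c/((k:ℝ)^2) := by
          rw [add_div, hcast]
  calc ‖Sz N / (N:ℝ)‖ = |Sz N| / (N:ℝ) := by
        rw [Real.norm_eq_abs, abs_div, abs_of_nonneg (le_of_lt hNpos)]
    _ ≤ |Sz (k^2)| / ((k^2:ℕ):ℝ) + (2*(k:ℝ)+1)*c/((k:ℝ)^2) := hmain
    _ = |Sz (k^2) / ((k^2:ℕ):ℝ)| + (2*(k:ℝ)+1)*c/((k:ℝ)^2) := by
        rw [abs_div, abs_of_nonneg (le_of_lt hKpos)]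

lemma moveServe_le {X : Type*} [DecidableEq X] (Ca : X → X → ℝ≥0∞) (Cr : ℝ≥0∞)
    (x : X) (T' S' : Finset X) :
    serveCost Ca Cr x T' ≤ moveCost Cr T' S' + serveCost Ca Cr x S' := by
  rw [moveCost]
  by_cases h1 : S' = T'
  · rw [if_pos h1, zero_add, h1]
  · rw [if_neg h1]
    by_cases h2 : (S' \ T').card = 1
    · rw [if_pos h2]
      exact le_add_right (min_le_right _ _)
    · rw [if_neg h2, top_add]
      exact le_top

end Aux

/-- Under the IRM with i.i.d. requests over a finite catalog, for any online
caching policy (the state `S_{t+1}` is chosen after seeing `r_0,…,r_t`), almost surely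
`liminf_T (1/T) ∑_{t<T} [C_m(S_t,S_{t+1}) + C(r_t,S_{t+1})] ≥ min_S 𝒞(S)`,
where `𝒞(S) = ∑_x λ_x C(x,S)` with `λ_x = ν{x}` the request probabilities. -/
theorem stmt12 {Ω : Type*} [MeasurableSpace Ω] (μ : Measure Ω) [IsProbabilityMeasure μ]
    {X : Type*} [Fintype X] [DecidableEq X] [MeasurableSpace X] [MeasurableSingletonClass X]
    (ν : Measure X) [IsProbabilityMeasure ν]
    (Ca : X → X → ℝ≥0∞) (Cr : ℝ≥0∞) (hCr : 0 < Cr) (hCrfin : Cr ≠ ⊤)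
    (k : ℕ)
    (r : ℕ → Ω → X) (hrmeas : ∀ t, Measurable (r t))
    (hindep : iIndepFun (m := fun _ : ℕ => ‹MeasurableSpace X›) r μ)
    (hident : ∀ t, Measure.map (r t) μ = ν)
    (S : ℕ → Ω → Finset X) (hcard : ∀ t ω, (S t ω).card = k)
    (A : (t : ℕ) → (Fin (t + 1) → X) → Finset X)
    (hS : ∀ t ω, S (t + 1) ω = A t (fun i => r i.val ω)) :
    ∀ᵐ ω ∂μ,
      (⨅ s : {s : Finset X // s.card = k}, ∑ x : X, ν {x} * serveCost Ca Cr x s.val) ≤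
        atTop.liminf (fun T : ℕ =>
          (∑ t ∈ Finset.range T,
            (moveCost Cr (S t ω) (S (t + 1) ω) + serveCost Ca Cr (r t ω) (S (t + 1) ω)))
          / (T : ℝ≥0∞)) := by
  classical
  set q : X → ℝ := fun x => (ν {x}).toReal with hqdef
  have hq0 : ∀ x, 0 ≤ q x := fun x => ENNReal.toReal_nonneg
  have hq1 : ∑ x, q x = 1 := by
    rw [hqdef, ← ENNReal.toReal_sum (fun x _ => measure_ne_top ν _),
      sum_meas_singleton, measure_univ, ENNReal.toReal_one]
  set c : ℝ := Cr.toReal with hcdef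
  have hc0 : 0 ≤ c := ENNReal.toReal_nonneg
  set f : Finset X → X → ℝ := fun s x => (serveCost Ca Cr x s).toReal with hfdef
  have hserve_le : ∀ x s, serveCost Ca Cr x s ≤ Cr := fun x s => min_le_right _ _
  have hserve_ne : ∀ x s, serveCost Ca Cr x s ≠ ⊤ :=
    fun x s => ne_top_of_le_ne_top hCrfin (hserve_le x s)
  have hf0 : ∀ s x, 0 ≤ f s x := fun s x => ENNReal.toReal_nonneg
  have hfc : ∀ s x, f s x ≤ c := fun s x => ENNReal.toReal_mono hCrfin (hserve_le x s)
  set cb : Finset X → ℝ := fun s => ∑ x, q x * f s x with hcbdef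
  have hcb0 : ∀ s, 0 ≤ cb s :=
    fun s => Finset.sum_nonneg fun x _ => mul_nonneg (hq0 x) (hf0 s x)
  have hcbc : ∀ s, cb s ≤ c := by
    intro s
    calc cb s ≤ ∑ x, q x * c :=
          Finset.sum_le_sum fun x _ => mul_le_mul_of_nonneg_left (hfc s x) (hq0 x)
      _ = c := by rw [← Finset.sum_mul, hq1, one_mul]
  have hCC_le : ∀ s : Finset X, (∑ x : X, ν {x} * serveCost Ca Cr x s) ≤ Cr := by
    intro s
    calc (∑ x : X, ν {x} * serveCost Ca Cr x s) ≤ ∑ x : X, ν {x} * Cr :=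
          Finset.sum_le_sum fun x _ => mul_le_mul_right (hserve_le x s) _
      _ = (∑ x : X, ν {x}) * Cr := (Finset.sum_mul _ _ _).symm
      _ = Cr := by rw [sum_meas_singleton, measure_univ, one_mul]
  have hCC_ne : ∀ s : Finset X, (∑ x : X, ν {x} * serveCost Ca Cr x s) ≠ ⊤ :=
    fun s => ne_top_of_le_ne_top hCrfin (hCC_le s)
  have hcb_eq : ∀ s : Finset X, cb s = (∑ x : X, ν {x} * serveCost Ca Cr x s).toReal := by
    intro s
    rw [ENNReal.toReal_sum (fun x _ => ne_top_of_le_ne_top (hCC_ne s)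
      (Finset.single_le_sum (f := fun x => ν {x} * serveCost Ca Cr x s)
        (fun x _ => zero_le) (Finset.mem_univ x)))]
    exact Finset.sum_congr rfl fun x _ => by rw [ENNReal.toReal_mul]
  set m : ℝ≥0∞ := ⨅ s : {s : Finset X // s.card = k},
    ∑ x : X, ν {x} * serveCost Ca Cr x s.val with hmdef
  have hmcb : ∀ s : Finset X, s.card = k → m.toReal ≤ cb s := by
    intro s hs
    rw [hcb_eq s]
    exact ENNReal.toReal_mono (hCC_ne s)
      (iInf_le (fun s : {s : Finset X // s.card = k} =>
        ∑ x : X, ν {x} * serveCost Ca Cr x s.val) ⟨s, hs⟩)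
  -- the martingale differences
  set ζ : (t : ℕ) → (Fin (t+2) → X) → ℝ := fun t w =>
    f (A t (Fin.init w)) (w (Fin.last (t+1))) - cb (A t (Fin.init w)) with hζdef
  have hb : ∀ t w, |ζ t w| ≤ c := by
    intro t w
    rw [abs_le]
    constructor
    · have h1 := hf0 (A t (Fin.init w)) (w (Fin.last (t+1)))
      have h2 := hcbc (A t (Fin.init w))
      simp only [hζdef]
      linarith
    · have h1 := hfc (A t (Fin.init w)) (w (Fin.last (t+1)))
      have h2 := hcb0 (A t (Fin.init w))
      simp only [hζdef]
      linarith
  have hcent : ∀ t (u : Fin (t+1) → X), ∑ x, q x * ζ t (Fin.snoc u x) = 0 := by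
    intro t u
    have h1 : ∀ x : X, ζ t (Fin.snoc u x) = f (A t u) x - cb (A t u) := by
      intro x
      simp only [hζdef, Fin.init_snoc, Fin.snoc_last]
    simp_rw [h1, mul_sub]
    rw [Finset.sum_sub_distrib, ← Finset.sum_mul, hq1, one_mul]
    exact sub_eq_zero.mpr rfl
  set Z : ℕ → Ω → ℝ := fun t ω => ζ t (fun i : Fin (t+2) => r i.val ω) with hZdef
  have hZeq : ∀ t ω, Z t ω = f (S (t+1) ω) (r (t+1) ω) - cb (S (t+1) ω) := by
    intro t ω
    rw [hS t ω]
    simp only [hZdef, hζdef]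
    have hin : Fin.init (fun i : Fin (t+2) => r i.val ω) = (fun i : Fin (t+1) => r i.val ω) :=
      funext fun i => rfl
    rw [hin]
    simp only [Fin.val_last]
  have hZb : ∀ t ω, |Z t ω| ≤ c := fun t ω => hb t _
  set Q : ℕ → Ω → ℝ := fun N ω => ∑ t ∈ Finset.range N, Z t ω with hQdef
  have hQmeas : ∀ N, Measurable (fun ω => Q N ω) := by
    intro N
    apply Finset.measurable_sum
    intro t _
    exact (measurable_of_countable (ζ t)).comp
      (measurable_pi_lambda _ fun i => hrmeas i.val)
  have hmom : ∀ N : ℕ, ∫⁻ ω, ENNReal.ofReal ((Q N ω)^2) ∂μ ≤ ENNReal.ofReal (N * c^2) := by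
    intro N
    have hΦ : ∀ ω, Q N ω = (fun w : Fin (N+1) → X => (∑ t : Fin N, ζ t.val
        (res (Nat.succ_le_succ (Nat.succ_le_of_lt t.isLt)) w))) (fun i : Fin (N+1) => r i.val ω) := by
      intro ω
      rw [hQdef]
      simp only
      rw [← Fin.sum_univ_eq_sum_range (fun t => Z t ω) N]
      refine Finset.sum_congr rfl fun t _ => ?_
      simp only [hZdef]
      exact congrArg (ζ t.val) (funext fun i => rfl)
    calc ∫⁻ ω, ENNReal.ofReal ((Q N ω)^2) ∂μ
        = ∫⁻ ω, ENNReal.ofReal ((fun w : Fin (N+1) → X => (∑ t : Fin N, ζ t.val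
            (res (Nat.succ_le_succ (Nat.succ_le_of_lt t.isLt)) w))^2)
            (fun i : Fin (N+1) => r i.val ω)) ∂μ := by
          refine lintegral_congr fun ω => ?_
          rw [hΦ ω]
      _ = ENNReal.ofReal (Ex q (N+1) (fun w => (∑ t : Fin N, ζ t.val
            (res (Nat.succ_le_succ (Nat.succ_le_of_lt t.isLt)) w))^2)) := by
          exact lint_eq μ ν r hrmeas hindep hident (N+1)
            (fun w => (∑ t : Fin N, ζ t.val
              (res (Nat.succ_le_succ (Nat.succ_le_of_lt t.isLt)) w))^2)
            (fun w => sq_nonneg _)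
      _ ≤ ENNReal.ofReal (N * c^2) :=
          ENNReal.ofReal_le_ofReal (secondMoment hq0 hq1 ζ c hc0 hb hcent N)
  set g : ℕ → Ω → ℝ≥0∞ := fun n ω =>
    ENNReal.ofReal ((Q ((n+1)^2) ω / ((((n+1)^2 : ℕ)) : ℝ))^2) with hgdef
  have hgmeas : ∀ n, Measurable (g n) := by
    intro n
    exact ENNReal.measurable_ofReal.comp (((hQmeas _).div_const _).pow_const 2)
  have hgint : ∀ n, ∫⁻ ω, g n ω ∂μ ≤ ENNReal.ofReal (c^2) * ENNReal.ofReal (1/((n:ℝ)+1)^2) := by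
    intro n
    have hNpos : (0:ℝ) < (((n+1)^2 : ℕ) : ℝ) := by positivity
    have hsplit : ∀ ω, (Q ((n+1)^2) ω / ((((n+1)^2 : ℕ)) : ℝ))^2
        = (Q ((n+1)^2) ω)^2 * (1/((((n+1)^2 : ℕ)) : ℝ)^2) := by
      intro ω
      rw [div_pow]
      ring
    calc ∫⁻ ω, g n ω ∂μ
        = ∫⁻ ω, ENNReal.ofReal ((Q ((n+1)^2) ω)^2)
            * ENNReal.ofReal (1/((((n+1)^2 : ℕ)) : ℝ)^2) ∂μ := by
          refine lintegral_congr fun ω => ?_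
          rw [hgdef]
          simp only
          rw [hsplit ω, ENNReal.ofReal_mul (sq_nonneg _)]
      _ = (∫⁻ ω, ENNReal.ofReal ((Q ((n+1)^2) ω)^2) ∂μ)
            * ENNReal.ofReal (1/((((n+1)^2 : ℕ)) : ℝ)^2) :=
          lintegral_mul_const _ (ENNReal.measurable_ofReal.comp ((hQmeas _).pow_const 2))
      _ ≤ ENNReal.ofReal ((((n+1)^2 : ℕ)) * c^2)
            * ENNReal.ofReal (1/((((n+1)^2 : ℕ)) : ℝ)^2) :=
          mul_le_mul_left (hmom _) _
      _ ≤ ENNReal.ofReal (c^2) * ENNReal.ofReal (1/((n:ℝ)+1)^2) := by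
          rw [← ENNReal.ofReal_mul (by positivity), ← ENNReal.ofReal_mul (by positivity)]
          apply ENNReal.ofReal_le_ofReal
          have hcast : (((n+1)^2 : ℕ) : ℝ) = ((n:ℝ)+1)^2 := by push_cast; ring
          apply le_of_eq
          rw [hcast]
          have hne : ((n:ℝ)+1) ≠ 0 := by positivity
          field_simp
  have hsummable : Summable (fun n : ℕ => 1/((n:ℝ)+1)^2) := by
    have h1 : Summable (fun n : ℕ => 1/((n:ℝ))^2) := Real.summable_one_div_nat_pow.mpr one_lt_two
    have h2 := (summable_nat_add_iff 1).mpr h1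
    refine h2.congr fun n => ?_
    push_cast
    ring
  have hsum : ∑' n, ∫⁻ ω, g n ω ∂μ ≠ ⊤ := by
    refine ne_top_of_le_ne_top ?_ (ENNReal.tsum_le_tsum hgint)
    rw [ENNReal.tsum_mul_left]
    refine ENNReal.mul_ne_top ENNReal.ofReal_ne_top ?_
    rw [← ENNReal.ofReal_tsum_of_nonneg (fun n => by positivity) hsummable]
    exact ENNReal.ofReal_ne_top
  have hBC : ∀ᵐ ω ∂μ, Tendsto (fun n => g n ω) atTop (nhds 0) := by
    have hfin : ∫⁻ ω, ∑' n, g n ω ∂μ ≠ ⊤ := by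
      rw [lintegral_tsum fun n => (hgmeas n).aemeasurable]
      exact hsum
    have hae := ae_lt_top (Measurable.ennreal_tsum hgmeas) hfin
    filter_upwards [hae] with ω hω
    exact ENNReal.tendsto_atTop_zero_of_tsum_ne_top hω.ne
  filter_upwards [hBC] with ω hω
  -- real convergence along squares
  have hQs : Tendsto (fun n : ℕ => Q ((n+1)^2) ω / ((((n+1)^2 : ℕ)) : ℝ)) atTop (nhds 0) := by
    have h2 : ∀ n, (g n ω).toReal = (Q ((n+1)^2) ω / ((((n+1)^2 : ℕ)) : ℝ))^2 := by
      intro n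
      rw [hgdef]
      exact ENNReal.toReal_ofReal (sq_nonneg _)
    have h1 : Tendsto (fun n => (g n ω).toReal) atTop (nhds 0) := by
      have h3 := (ENNReal.tendsto_toReal (a := 0) (by simp)).comp hω
      simpa [Function.comp_def] using h3
    have h3 : Tendsto (fun n => (Q ((n+1)^2) ω / ((((n+1)^2 : ℕ)) : ℝ))^2) atTop (nhds 0) := by
      refine h1.congr fun n => h2 n
    have h4 : Tendsto (fun n => |Q ((n+1)^2) ω / ((((n+1)^2 : ℕ)) : ℝ)|) atTop (nhds 0) := by
      have h5 := (Real.continuous_sqrt.tendsto 0).comp h3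
      simp only [Function.comp_def, Real.sqrt_sq_eq_abs, Real.sqrt_zero] at h5
      exact h5
    exact squeeze_zero_norm (fun n => le_of_eq (Real.norm_eq_abs _)) h4
  have hQN : Tendsto (fun N => Q N ω / (N:ℝ)) atTop (nhds 0) := by
    have h0 := interp (fun t => Z t ω) c hc0 (fun t => hZb t ω) (by
      refine hQs.congr fun n => ?_
      rw [hQdef])
    refine h0.congr fun N => ?_
    rw [hQdef]
  -- finiteness of m
  have hmne : m ≠ ⊤ :=
    ne_top_of_le_ne_top (hCC_ne (S 1 ω))
      (iInf_le (fun s : {s : Finset X // s.card = k} =>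
        ∑ x : X, ν {x} * serveCost Ca Cr x s.val) ⟨S 1 ω, hcard 1 ω⟩)
  set mR : ℝ := m.toReal with hmRdef
  -- the auxiliary real sequence
  set y : ℕ → ℝ := fun T => ((T-1:ℕ):ℝ)/(T:ℝ) * mR + Q (T-1) ω / (T:ℝ) with hydef
  have hy : Tendsto y atTop (nhds mR) := by
    have t1 : Tendsto (fun T : ℕ => ((T-1:ℕ):ℝ)/(T:ℝ)) atTop (nhds 1) := by
      have base : Tendsto (fun T : ℕ => 1 - 1/(T:ℝ)) atTop (nhds 1) := by
        have hbase := Filter.Tendsto.sub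
          (tendsto_const_nhds : Tendsto (fun _ : ℕ => (1:ℝ)) atTop (nhds 1))
          tendsto_one_div_atTop_nhds_zero_nat
        simpa using hbase
      refine base.congr' ?_
      filter_upwards [eventually_ge_atTop 1] with T hT
      have hTpos : (0:ℝ) < (T:ℝ) := by exact_mod_cast hT
      rw [Nat.cast_sub hT]
      field_simp
      simp
    have t2 : Tendsto (fun T : ℕ => Q (T-1) ω / (T:ℝ)) atTop (nhds 0) := by
      have hcomp : Tendsto (fun T : ℕ => |Q (T-1) ω / ((T-1:ℕ):ℝ)|) atTop (nhds 0) := by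
        have := (hQN.comp (tendsto_sub_atTop_nat 1)).abs
        simpa [Function.comp_def] using this
      refine squeeze_zero_norm' ?_ hcomp
      filter_upwards [eventually_ge_atTop 2] with T hT
      have h1 : (1:ℕ) ≤ T - 1 := by omega
      have hT1pos : (0:ℝ) < ((T-1:ℕ):ℝ) := by exact_mod_cast Nat.lt_of_lt_of_le Nat.zero_lt_one h1
      have hTpos : (0:ℝ) < (T:ℝ) := by
        have : (1:ℕ) ≤ T := by omega
        exact_mod_cast Nat.lt_of_lt_of_le Nat.zero_lt_one this
      have hle : ((T-1:ℕ):ℝ) ≤ (T:ℝ) := by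
        have : T - 1 ≤ T := by omega
        exact_mod_cast this
      rw [Real.norm_eq_abs, abs_div, abs_of_nonneg hTpos.le, abs_div,
        abs_of_nonneg hT1pos.le]
      exact div_le_div_of_nonneg_left (abs_nonneg _) hT1pos hle
    have := (t1.mul_const mR).add t2
    simpa using this
  -- the eventual lower bound
  have hev : ∀ᶠ T in atTop, ENNReal.ofReal (y T) ≤
      (∑ t ∈ Finset.range T,
        (moveCost Cr (S t ω) (S (t + 1) ω) + serveCost Ca Cr (r t ω) (S (t + 1) ω)))
      / (T : ℝ≥0∞) := by
    filter_upwards [eventually_ge_atTop 1] with T hT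
    obtain ⟨N, rfl⟩ : ∃ N, T = N + 1 := ⟨T-1, by omega⟩
    have h1 : (∑ t ∈ Finset.range (N+1), serveCost Ca Cr (r t ω) (S t ω))
        ≤ ∑ t ∈ Finset.range (N+1),
          (moveCost Cr (S t ω) (S (t + 1) ω) + serveCost Ca Cr (r t ω) (S (t + 1) ω)) :=
      Finset.sum_le_sum fun t _ => moveServe_le Ca Cr (r t ω) (S t ω) (S (t+1) ω)
    have h2 : (∑ t ∈ Finset.range N, serveCost Ca Cr (r (t+1) ω) (S (t+1) ω))
        ≤ ∑ t ∈ Finset.range (N+1), serveCost Ca Cr (r t ω) (S t ω) := by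
      rw [Finset.sum_range_succ' (fun t => serveCost Ca Cr (r t ω) (S t ω)) N]
      exact le_add_right le_rfl
    have h3 : (∑ t ∈ Finset.range N, serveCost Ca Cr (r (t+1) ω) (S (t+1) ω))
        = ENNReal.ofReal (∑ t ∈ Finset.range N, f (S (t+1) ω) (r (t+1) ω)) := by
      rw [ENNReal.ofReal_sum_of_nonneg fun t _ => hf0 _ _]
      exact Finset.sum_congr rfl fun t _ => (ENNReal.ofReal_toReal (hserve_ne _ _)).symm
    have h4 : (N:ℝ) * mR + Q N ω ≤ ∑ t ∈ Finset.range N, f (S (t+1) ω) (r (t+1) ω) := by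
      have hterm : ∀ t, mR + Z t ω ≤ f (S (t+1) ω) (r (t+1) ω) := by
        intro t
        rw [hZeq t ω]
        have := hmcb (S (t+1) ω) (hcard (t+1) ω)
        linarith
      calc (N:ℝ) * mR + Q N ω = ∑ t ∈ Finset.range N, (mR + Z t ω) := by
            rw [Finset.sum_add_distrib, Finset.sum_const, Finset.card_range,
              nsmul_eq_mul, hQdef]
        _ ≤ _ := Finset.sum_le_sum fun t _ => hterm t
    have h5 : ENNReal.ofReal ((N:ℝ) * mR + Q N ω)
        ≤ ∑ t ∈ Finset.range (N+1),
          (moveCost Cr (S t ω) (S (t + 1) ω) + serveCost Ca Cr (r t ω) (S (t + 1) ω)) := by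
      refine le_trans (ENNReal.ofReal_le_ofReal h4) ?_
      rw [← h3]
      exact h2.trans h1
    have hy_eq : y (N+1) = ((N:ℝ) * mR + Q N ω) / ((N+1:ℕ):ℝ) := by
      rw [hydef]
      simp only [Nat.add_sub_cancel]
      push_cast
      ring
    rw [hy_eq, ENNReal.ofReal_div_of_pos (by positivity), ENNReal.ofReal_natCast]
    exact ENNReal.div_le_div_right h5 _
  calc m = ENNReal.ofReal mR := (ENNReal.ofReal_toReal hmne).symm
    _ = atTop.liminf (fun T => ENNReal.ofReal (y T)) :=
      (((ENNReal.continuous_ofReal.tendsto mR).comp hy).liminf_eq).symm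
    _ ≤ _ := liminf_le_liminf hev
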